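/- There are exactly 2^(n-1) idempotent discrete uninorms on the n-element chain Lₙ = {1,…,n}, i.e., exactly 2^(n-1) operations F : Lₙ² → Lₙ that are conservative, symmetric, and nondecreasing. -/

import Mathlib

private def myCons {m : ℕ} (F : Fin m → Fin m → Fin m) : Prop :=
  (∀ x y, F x y = x ∨ F x y = y) ∧ (∀ x y, F x y = F y x) ∧
    (∀ x x' y y', x ≤ x' → y ≤ y' → F x y ≤ F x' y')

private def myU (m : ℕ) := {F : Fin m → Fin m → Fin m // myCons F}

namespace Stmt11Aux

variable {n : ℕ}

/-- the absorbing endpoint selected by `b` -/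
def ab (n : ℕ) (b : Bool) : Fin (n + 2) :=
  match b with
  | true => Fin.last (n + 1)
  | false => 0

/-- embedding of the chain with the `b`-endpoint removed -/
def eb (b : Bool) (x : Fin (n + 1)) : Fin (n + 2) :=
  match b with
  | true => x.castSucc
  | false => x.succ

/-- retraction -/
def pb (b : Bool) (X : Fin (n + 2)) : Fin (n + 1) :=
  match b with
  | true => ⟨min X.val n, by omega⟩
  | false => ⟨X.val - 1, by omega⟩

lemma eb_ne_ab (b : Bool) (x : Fin (n + 1)) : eb b x ≠ ab n b := by
  cases b <;> simp only [eb, ab, ne_eq, Fin.ext_iff, Fin.val_succ, Fin.val_castSucc, Fin.val_last, Fin.val_zero] <;> omega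

lemma eb_pb {b : Bool} {X : Fin (n + 2)} (h : X ≠ ab n b) : eb b (pb b X) = X := by
  have hx := X.isLt
  cases b <;> simp only [eb, ab, pb, ne_eq, Fin.ext_iff, Fin.val_succ, Fin.val_castSucc, Fin.val_last, Fin.val_zero] at h ⊢ <;> omega

lemma pb_eb (b : Bool) (x : Fin (n + 1)) : pb b (eb b x) = x := by
  have hx := x.isLt
  cases b <;> simp [eb, pb, Fin.ext_iff] <;> omega

lemma eb_le_iff {b : Bool} {x y : Fin (n + 1)} : eb b x ≤ eb b y ↔ x ≤ y := by
  cases b <;> simp only [eb] <;> rw [Fin.le_def, Fin.le_def] <;> simp <;> omega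

lemma eb_inj {b : Bool} {x y : Fin (n + 1)} (h : eb b x = eb b y) : x = y := by
  have := pb_eb b x
  rw [← this, h, pb_eb]

lemma pb_mono {b : Bool} {X Y : Fin (n + 2)} (h : X ≤ Y) : pb b X ≤ pb b Y := by
  rw [Fin.le_def] at h
  cases b <;> simp only [pb] <;> rw [Fin.le_def] <;> simp <;> omega

/-- which endpoint of `F` is absorbing -/
def bF (F : Fin (n + 2) → Fin (n + 2) → Fin (n + 2)) : Bool :=
  decide (F 0 (Fin.last (n + 1)) = Fin.last (n + 1))

lemma absorb {F : Fin (n + 2) → Fin (n + 2) → Fin (n + 2)} (hF : myCons F) (W : Fin (n + 2)) :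
    F (ab n (bF F)) W = ab n (bF F) := by
  obtain ⟨hc, hs, hm⟩ := hF
  by_cases h : F 0 (Fin.last (n + 1)) = Fin.last (n + 1)
  · have hb : bF F = true := by simp [bF, h]
    rw [hb]
    have h1 : F W (Fin.last (n + 1)) = Fin.last (n + 1) := by
      have := hm 0 W (Fin.last (n + 1)) (Fin.last (n + 1)) (Fin.zero_le W) le_rfl
      rw [h] at this
      exact le_antisymm (Fin.le_last _) this
    simp [ab]
    rw [hs, h1]
  · have hb : bF F = false := by simp [bF, h]
    rw [hb]
    have h0 : F 0 (Fin.last (n + 1)) = 0 := (hc 0 (Fin.last (n + 1))).resolve_right h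
    have h1 : F 0 W ≤ 0 := by
      have := hm 0 0 W (Fin.last (n + 1)) le_rfl (Fin.le_last W)
      rw [h0] at this; exact this
    simp [ab]
    exact Fin.le_zero_iff.mp h1

/-- restriction of `F` to the chain with the `b`-endpoint removed -/
def res (b : Bool) (F : Fin (n + 2) → Fin (n + 2) → Fin (n + 2)) (x y : Fin (n + 1)) :
    Fin (n + 1) :=
  if F (eb b x) (eb b y) = eb b x then x else y

lemma eb_res {b : Bool} {F : Fin (n + 2) → Fin (n + 2) → Fin (n + 2)}
    (hc : ∀ x y, F x y = x ∨ F x y = y) (x y : Fin (n + 1)) :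
    eb b (res b F x y) = F (eb b x) (eb b y) := by
  unfold res
  split_ifs with h
  · exact h.symm
  · exact ((hc (eb b x) (eb b y)).resolve_left h).symm

lemma res_cons {b : Bool} {F : Fin (n + 2) → Fin (n + 2) → Fin (n + 2)}
    (hF : myCons F) : myCons (res b F) := by
  obtain ⟨hc, hs, hm⟩ := hF
  refine ⟨fun x y => ?_, fun x y => ?_, fun x x' y y' hx hy => ?_⟩
  · unfold res; split_ifs <;> [left; right] <;> rfl
  · apply eb_inj (b := b)
    rw [eb_res hc, eb_res hc, hs]
  · rw [← eb_le_iff (b := b), eb_res hc, eb_res hc]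
    exact hm _ _ _ _ (eb_le_iff.mpr hx) (eb_le_iff.mpr hy)

/-- extension of `F'` by an absorbing endpoint at `ab n b` -/
def ext (b : Bool) (F' : Fin (n + 1) → Fin (n + 1) → Fin (n + 1)) (X Y : Fin (n + 2)) :
    Fin (n + 2) :=
  if X = ab n b ∨ Y = ab n b then ab n b else eb b (F' (pb b X) (pb b Y))

lemma ext_cons {b : Bool} {F' : Fin (n + 1) → Fin (n + 1) → Fin (n + 1)}
    (hF : myCons F') : myCons (ext b F') := by
  obtain ⟨hc, hs, hm⟩ := hF
  refine ⟨fun X Y => ?_, fun X Y => ?_, fun X X' Y Y' hX hY => ?_⟩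
  · unfold ext
    split_ifs with h
    · rcases h with h | h
      · left; rw [h]
      · right; rw [h]
    · push_neg at h
      rcases hc (pb b X) (pb b Y) with h1 | h1 <;> rw [h1]
      · left; exact eb_pb h.1
      · right; exact eb_pb h.2
  · unfold ext
    by_cases h : X = ab n b ∨ Y = ab n b
    · rw [if_pos h, if_pos h.symm]
    · rw [if_neg h, if_neg (fun hh => h hh.symm), hs]
  · unfold ext
    cases b
    · -- absorbing endpoint is 0
      by_cases h : X = ab n false ∨ Y = ab n false
      · rw [if_pos h]
        exact Fin.zero_le _
      · push_neg at h
        have h' : ¬(X' = ab n false ∨ Y' = ab n false) := by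
          push_neg
          simp only [ab, if_neg Bool.false_ne_true] at h ⊢
          constructor
          · intro hX'; apply h.1; exact le_antisymm (hX' ▸ hX) (Fin.zero_le _)
          · intro hY'; apply h.2; exact le_antisymm (hY' ▸ hY) (Fin.zero_le _)
        rw [if_neg (by push_neg; exact h), if_neg h']
        exact eb_le_iff.mpr (hm _ _ _ _ (pb_mono hX) (pb_mono hY))
    · -- absorbing endpoint is last
      by_cases h' : X' = ab n true ∨ Y' = ab n true
      · rw [if_pos h']
        simp only [ab, if_pos rfl]
        exact Fin.le_last _
      · push_neg at h'
        have h : ¬(X = ab n true ∨ Y = ab n true) := by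
          push_neg
          simp only [ab, if_pos rfl] at h' ⊢
          constructor
          · intro hX0; apply h'.1; exact le_antisymm (Fin.le_last _) (hX0 ▸ hX)
          · intro hY0; apply h'.2; exact le_antisymm (Fin.le_last _) (hY0 ▸ hY)
        rw [if_neg h, if_neg (by push_neg; exact h')]
        exact eb_le_iff.mpr (hm _ _ _ _ (pb_mono hX) (pb_mono hY))

lemma zero_ne_last : (0 : Fin (n + 2)) ≠ Fin.last (n + 1) := by
  simp [Fin.ext_iff]

def toFun (F : myU (n + 2)) : Bool × myU (n + 1) :=
  (bF F.1, ⟨res (bF F.1) F.1, res_cons F.2⟩)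

def invFun (p : Bool × myU (n + 1)) : myU (n + 2) :=
  ⟨ext p.1 p.2.1, ext_cons p.2.2⟩

lemma left_inv : Function.LeftInverse (invFun (n := n)) (toFun (n := n)) := by
  rintro ⟨F, hF⟩
  obtain ⟨hc, hs, hm⟩ := hF
  apply Subtype.ext
  funext X Y
  show ext (bF F) (res (bF F) F) X Y = F X Y
  unfold ext
  split_ifs with h
  · rcases h with h | h
    · rw [h]; exact (absorb ⟨hc, hs, hm⟩ Y).symm
    · rw [h, hs]; exact (absorb ⟨hc, hs, hm⟩ X).symm
  · push_neg at h
    rw [eb_res hc, eb_pb h.1, eb_pb h.2]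

lemma right_inv : Function.RightInverse (invFun (n := n)) (toFun (n := n)) := by
  rintro ⟨b, F', hF'⟩
  obtain ⟨hc, hs, hm⟩ := hF'
  have hb : bF (ext b F') = b := by
    cases b
    · have : ext false F' 0 (Fin.last (n + 1)) = 0 := by
        unfold ext
        rw [if_pos (Or.inl (by simp [ab]))]
        simp [ab]
      simp [bF, this, zero_ne_last]
    · have : ext true F' 0 (Fin.last (n + 1)) = Fin.last (n + 1) := by
        unfold ext
        rw [if_pos (Or.inr (by simp [ab]))]
        simp [ab]
      simp [bF, this]
  unfold toFun invFun
  refine Prod.ext hb ?_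
  apply Subtype.ext
  simp only
  funext x y
  rw [hb]
  show res b (ext b F') x y = F' x y
  have key : ext b F' (eb b x) (eb b y) = eb b (F' x y) := by
    unfold ext
    rw [if_neg (by push_neg; exact ⟨eb_ne_ab b x, eb_ne_ab b y⟩), pb_eb, pb_eb]
  unfold res
  rw [key]
  split_ifs with h
  · exact (eb_inj h).symm
  · rcases hc x y with h1 | h1
    · exact absurd (by rw [h1]) h
    · exact h1.symm

def stepEquiv : myU (n + 2) ≃ Bool × myU (n + 1) :=
  ⟨toFun, invFun, left_inv, right_inv⟩

end Stmt11Aux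

private lemma myU_card : ∀ n : ℕ, Nat.card (myU (n + 1)) = 2 ^ n := by
  intro n
  induction n with
  | zero =>
    have huniq : ∀ F : myU 1, F = ⟨fun _ _ => 0,
        ⟨fun x y => Or.inl (Subsingleton.elim _ _),
         fun x y => Subsingleton.elim (α := Fin 1) _ _,
         fun _ _ _ _ _ _ => le_of_eq (Subsingleton.elim (α := Fin 1) _ _)⟩⟩ := by
      intro F
      apply Subtype.ext
      funext x y
      exact Subsingleton.elim (α := Fin 1) _ _
    haveI : Unique (myU 1) := ⟨⟨_⟩, huniq⟩
    exact Nat.card_unique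
  | succ m ih =>
    rw [Nat.card_congr (Stmt11Aux.stepEquiv (n := m)), Nat.card_prod]
    simp [ih, pow_succ, mul_comm]

theorem stmt_11 {n : ℕ} (hn : 1 ≤ n) :
    Nat.card {F : Fin n → Fin n → Fin n //
      (∀ x y, F x y = x ∨ F x y = y) ∧ (∀ x y, F x y = F y x) ∧
      (∀ x x' y y', x ≤ x' → y ≤ y' → F x y ≤ F x' y')} = 2 ^ (n - 1) := by
  obtain ⟨m, rfl⟩ : ∃ m, n = m + 1 := ⟨n - 1, (Nat.succ_pred_eq_of_pos hn).symm⟩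
  show Nat.card (myU (m + 1)) = 2 ^ (m + 1 - 1)
  rw [Nat.add_sub_cancel]
  exact myU_card m
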